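/- Let A = [A₀ I] with A₀ an m×n real matrix, b ∈ ℝ^m, c ∈ ℝ^{m+n} with last m entries zero, and let (B,N) be a partition of {1,…,m+n} with |B| = m and A_B invertible. Set Q = A_B⁻¹A_N, p = A_B⁻¹b, q = c_N − A_Nᵀ A_B⁻ᵀ c_B, z* = c_Bᵀ A_B⁻¹ b. Then for y ∈ ℝ^{m+n} and w ∈ ℝ, the conditions y_N = −q + Qᵀ y_B and w = z* + pᵀ y_B hold if and only if y_N' = A₀ᵀ y_B' − c₀ and w = bᵀ y_B', where y_N' ∈ ℝ^n denotes the first n coordinates of y, y_B' ∈ ℝ^m the last m coordinates, and c₀ ∈ ℝ^n the first n entries of c. -/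

import Mathlib

open Matrix

/-- Main theorem: the negative transpose of a primal dictionary is a dictionary for
the dual LP. With the setup `A = [A₀ I]`, `c` vanishing on slack coordinates,
basis `B` (via the ordered partition `e`) with `A_B` invertible, `Q = A_B⁻¹A_N`,
`p = A_B⁻¹b`, `q = c_N − A_Nᵀ A_B⁻ᵀ c_B`, `z* = c_Bᵀ A_B⁻¹ b`, the system
`y_N = −q + Qᵀ y_B`, `w = z* + pᵀ y_B` holds iff the initial dual dictionary
`y_N' = A₀ᵀ y_B' − c₀`, `w = bᵀ y_B'` holds. -/
theorem dual_dictionary (m n : ℕ) (A₀ : Matrix (Fin m) (Fin n) ℝ) (b : Fin m → ℝ)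
    (c : Fin n ⊕ Fin m → ℝ) (hc : ∀ k : Fin m, c (Sum.inr k) = 0)
    (e : Fin m ⊕ Fin n ≃ Fin n ⊕ Fin m)
    (A : Matrix (Fin m) (Fin n ⊕ Fin m) ℝ)
    (hA : A = Matrix.fromCols A₀ (1 : Matrix (Fin m) (Fin m) ℝ))
    (AB : Matrix (Fin m) (Fin m) ℝ) (hAB : AB = A.submatrix id (fun i => e (Sum.inl i)))
    (AN : Matrix (Fin m) (Fin n) ℝ) (hAN : AN = A.submatrix id (fun j => e (Sum.inr j)))
    (hABu : IsUnit AB)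
    (Q : Matrix (Fin m) (Fin n) ℝ) (hQ : Q = AB⁻¹ * AN)
    (p : Fin m → ℝ) (hp : p = AB⁻¹.mulVec b)
    (q : Fin n → ℝ)
    (hq : q = (fun j => c (e (Sum.inr j))) - (ANᵀ * AB⁻¹ᵀ).mulVec (fun i => c (e (Sum.inl i))))
    (zs : ℝ) (hzs : zs = (fun i => c (e (Sum.inl i))) ⬝ᵥ AB⁻¹.mulVec b)
    (y : Fin n ⊕ Fin m → ℝ) (w : ℝ) :
    ((fun j => y (e (Sum.inr j))) = -q + Qᵀ.mulVec (fun i => y (e (Sum.inl i))) ∧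
        w = zs + p ⬝ᵥ (fun i => y (e (Sum.inl i)))) ↔
      ((fun j => y (Sum.inl j)) = A₀ᵀ.mulVec (fun k => y (Sum.inr k)) -
          (fun j => c (Sum.inl j)) ∧
        w = b ⬝ᵥ (fun k => y (Sum.inr k))) := by
  classical
  have hdet : IsUnit AB.det := (Matrix.isUnit_iff_isUnit_det AB).mp hABu
  have hinv : AB⁻¹ * AB = 1 := Matrix.nonsing_inv_mul AB hdet
  have hinv' : AB * AB⁻¹ = 1 := Matrix.mul_nonsing_inv AB hdet
  set cB : Fin m → ℝ := fun i => c (e (Sum.inl i)) with hcBdef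
  set u : Fin m → ℝ := fun i => y (e (Sum.inl i)) with hudef
  set y' : Fin m → ℝ := fun k => y (Sum.inr k) with hy'def
  set t : Fin m → ℝ := (AB⁻¹)ᵀ.mulVec (cB + u) with htdef
  have hTinv : ABᵀ * (AB⁻¹)ᵀ = 1 := by
    rw [← Matrix.transpose_mul, hinv, Matrix.transpose_one]
  have hTinv' : (AB⁻¹)ᵀ * ABᵀ = 1 := by
    rw [← Matrix.transpose_mul, hinv', Matrix.transpose_one]
  have hABtT : ABᵀ.mulVec t = cB + u := by
    rw [htdef, Matrix.mulVec_mulVec, hTinv, Matrix.one_mulVec]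
  -- columns of A
  have hslack : ∀ r k : Fin m, A r (Sum.inr k) = if r = k then 1 else 0 := by
    intro r k
    rw [hA, Matrix.fromCols_apply_inr, Matrix.one_apply]
  have hcolB : ∀ (s : Fin m → ℝ) (i : Fin m),
      (∑ r, A r (e (Sum.inl i)) * s r) = (ABᵀ.mulVec s) i := by
    intro s i
    simp [Matrix.mulVec, dotProduct, hAB]
  have hcolN : ∀ (s : Fin m → ℝ) (j : Fin n),
      (∑ r, A r (e (Sum.inr j)) * s r) = (ANᵀ.mulVec s) j := by
    intro s j
    simp [Matrix.mulVec, dotProduct, hAN]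
  -- key fact E : the basic equations hold for `t` by construction
  have hE : ∀ i, u i = (∑ r, A r (e (Sum.inl i)) * t r) - c (e (Sum.inl i)) := by
    intro i
    rw [hcolB, hABtT]
    show u i = (cB i + u i) - cB i
    ring
  -- the "full system" predicate
  set P : (Fin m → ℝ) → Prop :=
    fun s => ∀ l, y l = (∑ r, A r l * s r) - c l with hPdef
  -- the nonbasic equation in terms of `t`
  have hLHS1 : (-q + Qᵀ.mulVec u) = ANᵀ.mulVec t - (fun j => c (e (Sum.inr j))) := by
    rw [hq, hQ, Matrix.transpose_mul, htdef, ← Matrix.mulVec_mulVec,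
      ← Matrix.mulVec_mulVec, Matrix.mulVec_add, Matrix.mulVec_add]
    funext j
    simp only [Pi.add_apply, Pi.sub_apply, Pi.neg_apply]
    ring
  have hPt_of : ((fun j => y (e (Sum.inr j))) = -q + Qᵀ.mulVec u) → P t := by
    intro h1 l
    obtain ⟨s, rfl⟩ : ∃ s, l = e s := ⟨e.symm l, (e.apply_symm_apply l).symm⟩
    cases s with
    | inl i => exact hE i
    | inr j =>
      have := congrFun h1 j
      rw [hLHS1] at this
      rw [this, hcolN]
      rfl
  have hof_Pt : P t → ((fun j => y (e (Sum.inr j))) = -q + Qᵀ.mulVec u) := by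
    intro hP
    funext j
    rw [hLHS1]
    have := hP (e (Sum.inr j))
    rw [hcolN] at this
    exact this
  -- P y' ↔ the initial dual dictionary equation
  have hcolInl : ∀ (s : Fin m → ℝ) (j : Fin n),
      (∑ r, A r (Sum.inl j) * s r) = (A₀ᵀ.mulVec s) j := by
    intro s j
    simp [Matrix.mulVec, dotProduct, hA]
  have hPy'_iff : P y' ↔
      ((fun j => y (Sum.inl j)) = A₀ᵀ.mulVec y' - (fun j => c (Sum.inl j))) := by
    constructor
    · intro hP
      funext j
      have := hP (Sum.inl j)
      rw [hcolInl] at this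
      exact this
    · intro h l
      cases l with
      | inl j =>
        rw [hcolInl]
        simpa using congrFun h j
      | inr k =>
        have : (∑ r, A r (Sum.inr k) * y' r) = y' k := by
          simp [hslack]
        rw [this, hc]
        show y' k = y' k - 0
        ring
  -- P t forces y' = t
  have hPt_y' : P t → y' = t := by
    intro hP
    funext k
    have := hP (Sum.inr k)
    have hsum : (∑ r, A r (Sum.inr k) * t r) = t k := by simp [hslack]
    rw [hsum, hc] at this
    simpa using this
  -- P y' forces y' = t
  have hPy'_t : P y' → y' = t := by
    intro hP
    have hB : ABᵀ.mulVec y' = cB + u := by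
      funext i
      have := hP (e (Sum.inl i))
      rw [hcolB] at this
      show (ABᵀ.mulVec y') i = cB i + u i
      have h2 : u i = (ABᵀ.mulVec y') i - cB i := this
      linarith
    have : (AB⁻¹)ᵀ.mulVec (ABᵀ.mulVec y') = (AB⁻¹)ᵀ.mulVec (cB + u) := by rw [hB]
    rw [Matrix.mulVec_mulVec, hTinv', Matrix.one_mulVec] at this
    rw [this, htdef]
  -- the objective rows agree once y' = t
  have hw : zs + p ⬝ᵥ u = b ⬝ᵥ t := by
    rw [htdef, Matrix.mulVec_transpose, dotProduct_comm b,
      ← Matrix.dotProduct_mulVec, hzs, hp, add_dotProduct,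
      dotProduct_comm u]
  constructor
  · rintro ⟨h1, h2⟩
    have hPt := hPt_of h1
    have hyt := hPt_y' hPt
    have hPy' : P y' := by rw [hyt]; exact hPt
    refine ⟨hPy'_iff.mp hPy', ?_⟩
    rw [h2, hw, hyt]
  · rintro ⟨h1, h2⟩
    have hPy' : P y' := hPy'_iff.mpr h1
    have hyt := hPy'_t hPy'
    have hPt : P t := by rw [← hyt]; exact hPy'
    refine ⟨hof_Pt hPt, ?_⟩
    rw [h2, hw, hyt]
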